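/- Let X be a compact complex 3-fold with holomorphic bundle E → X satisfying c₁^{BC}(E) = 0 and c₂^{BC}(E) = c₂^{BC}(X), and let (ω, h) solve the anomaly cancellation equation i∂∂̄ω = α'(Tr R_ω ∧ R_ω − Tr F_h ∧ F_h). Then the Aeppli class 𝔞(ω,h) = [ω − α' R₂[g,ĝ] + α' R₂[h,ĥ] − α' β̂] ∈ H^{1,1}_A(X,ℝ) is independent of the choice of reference metrics (ω̂, ĥ): for two choices of reference pairs, the difference −R₂[g,ĝ₁] + R₂[g,ĝ₂] + R₂[h,ĥ₁] − R₂[h,ĥ₂] − β̂₁ + β̂₂ vanishes identically. -/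

import Mathlib

/-!
The Hodge-theoretic machinery of the Kodaira–Spencer operator
`E = ∂∂̄(∂∂̄)† + (∂∂̄)†∂∂̄ + (∂†∂̄)†∂†∂̄ + ∂†∂̄(∂†∂̄)† + ∂̄†∂̄ + ∂†∂`
acting on `(2,2)`-forms of a compact Hermitian complex manifold.  The spaces
`V p q` of `(p,q)`-forms are recorded as complex inner product spaces, with
`∂`, `∂̄` and their formal adjoints as linear maps.
-/

noncomputable section

/-- the Dolbeault double complex of a compact Hermitian complex manifold,
with the formal adjoints of `∂` and `∂̄` with respect to a fixed reference
metric. -/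
structure DolbeaultHodge where
  /-- the space of `(p,q)`-forms -/
  V : ℕ → ℕ → Type
  [instN : ∀ p q, NormedAddCommGroup (V p q)]
  [instI : ∀ p q, InnerProductSpace ℂ (V p q)]
  /-- the operator `∂` -/
  dH : ∀ p q, V p q →ₗ[ℂ] V (p+1) q
  /-- the operator `∂̄` -/
  dA : ∀ p q, V p q →ₗ[ℂ] V p (q+1)
  /-- the formal adjoint `∂†` -/
  dHdag : ∀ p q, V (p+1) q →ₗ[ℂ] V p q
  /-- the formal adjoint `∂̄†` -/
  dAdag : ∀ p q, V p (q+1) →ₗ[ℂ] V p q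
  adj_H : ∀ p q (u : V p q) (v : V (p+1) q),
      (inner ℂ (dH p q u) v : ℂ) = inner ℂ u (dHdag p q v)
  adj_A : ∀ p q (u : V p q) (v : V p (q+1)),
      (inner ℂ (dA p q u) v : ℂ) = inner ℂ u (dAdag p q v)
  dH_sq : ∀ p q (u : V p q), dH (p+1) q (dH p q u) = 0
  dA_sq : ∀ p q (u : V p q), dA p (q+1) (dA p q u) = 0
  anticomm : ∀ p q (u : V p q), dH p (q+1) (dA p q u) = - dA (p+1) q (dH p q u)

attribute [instance] DolbeaultHodge.instN DolbeaultHodge.instI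

namespace DolbeaultHodge

variable (S : DolbeaultHodge)

/-- the Kodaira–Spencer operator
`E = ∂∂̄(∂∂̄)† + (∂∂̄)†∂∂̄ + (∂†∂̄)†∂†∂̄ + ∂†∂̄(∂†∂̄)† + ∂̄†∂̄ + ∂†∂`
on `(2,2)`-forms. -/
def KS (η : S.V 2 2) : S.V 2 2 :=
  S.dH 1 2 (S.dA 1 1 (S.dAdag 1 1 (S.dHdag 1 2 η)))
  + S.dAdag 2 2 (S.dHdag 2 3 (S.dH 2 3 (S.dA 2 2 η)))
  + S.dAdag 2 2 (S.dH 1 3 (S.dHdag 1 3 (S.dA 2 2 η)))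
  + S.dHdag 2 2 (S.dA 3 1 (S.dAdag 3 1 (S.dH 2 2 η)))
  + S.dAdag 2 2 (S.dA 2 2 η)
  + S.dHdag 2 2 (S.dH 2 2 η)

/-- `E` as a linear map. -/
def KSlin : S.V 2 2 →ₗ[ℂ] S.V 2 2 where
  toFun := S.KS
  map_add' := by intro u v; simp [KS, map_add]; abel
  map_smul' := by intro c u; simp [KS, map_smul]

/-- `∂̄†∂†η` for a `(2,2)`-form. -/
def dbarDagDdag (η : S.V 2 2) : S.V 1 1 := S.dAdag 1 1 (S.dHdag 1 2 η)

end DolbeaultHodge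

/-!
STATEMENT 12: let `X` be a compact complex 3-fold with a holomorphic bundle
`E → X` satisfying `c₁^{BC}(E) = 0` and `c₂^{BC}(E) = c₂^{BC}(X)`, and let
`(ω, h)` solve the anomaly cancellation equation
`i∂∂̄ω = α'(Tr R_ω∧R_ω - Tr F_h∧F_h)`.  Then the Aeppli class
`𝔞(ω,h) = [ω - α'R₂[g,ĝ] + α'R₂[h,ĥ] - α'β̂] ∈ H^{1,1}_A(X,ℝ)` is
independent of the choice of reference metrics `(ω̂,ĥ)`: for two reference
pairs, `-R₂[g,ĝ₁] + R₂[g,ĝ₂] + R₂[h,ĥ₁] - R₂[h,ĥ₂] - β̂₁ + β̂₂ = 0`.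

Here `R₂[g,ĝ] = -i∂̄†∂† E⁻¹(Tr R_g∧R_g - Tr R_ĝ∧R_ĝ)` is defined via the
Kodaira–Spencer operator `E`, i.e. through the unique `γ ∈ (ker E)ᗮ` with
`E(γ) = Tr R_g∧R_g - Tr R_ĝ∧R_ĝ`; similarly for `R₂[h,ĥ]`; and
`β̂ = -i∂̄†∂†γ̂` where `E(γ̂) = Tr R_ĝ∧R_ĝ - Tr F_ĥ∧F_ĥ` (this is the
condition `c₂^{BC}(E) = c₂^{BC}(X)`).
-/

open DolbeaultHodge in
theorem aeppli_class_independent_of_reference (S : DolbeaultHodge)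
    -- the slope parameter
    (α : ℝ) (hα : 0 < α)
    -- `ω` and the first Chern form `Tr F_h` of `(E,h)`
    (ω : S.V 1 1) (trF1 : S.V 1 1)
    -- Chern–Weil `(2,2)`-forms of `(ω,h)` and of the two reference pairs
    (trRg trFh trRg1 trRg2 trFh1 trFh2 : S.V 2 2)
    -- `c₁^{BC}(E) = 0`
    (hc1 : ∃ u : S.V 0 0, trF1 = Complex.I • S.dH 0 1 (S.dA 0 0 u))
    -- the anomaly cancellation equation `i∂∂̄ω = α'(Tr R∧R - Tr F∧F)`
    (hanomaly : Complex.I • S.dH 1 2 (S.dA 1 1 ω) = (α : ℂ) • (trRg - trFh))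
    -- the Bott–Chern–Simons potentials `γ = E⁻¹(...) ∈ (ker E)ᗮ`
    (γg1 γg2 γh1 γh2 γhat1 γhat2 : S.V 2 2)
    (hγg1 : γg1 ∈ (LinearMap.ker S.KSlin)ᗮ) (hEγg1 : S.KS γg1 = trRg - trRg1)
    (hγg2 : γg2 ∈ (LinearMap.ker S.KSlin)ᗮ) (hEγg2 : S.KS γg2 = trRg - trRg2)
    (hγh1 : γh1 ∈ (LinearMap.ker S.KSlin)ᗮ) (hEγh1 : S.KS γh1 = trFh - trFh1)
    (hγh2 : γh2 ∈ (LinearMap.ker S.KSlin)ᗮ) (hEγh2 : S.KS γh2 = trFh - trFh2)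
    -- `c₂^{BC}(E) = c₂^{BC}(X)`: the potentials defining `β̂ᵢ = -i∂̄†∂†γ̂ᵢ`
    (hγhat1 : γhat1 ∈ (LinearMap.ker S.KSlin)ᗮ)
    (hEγhat1 : S.KS γhat1 = trRg1 - trFh1)
    (hγhat2 : γhat2 ∈ (LinearMap.ker S.KSlin)ᗮ)
    (hEγhat2 : S.KS γhat2 = trRg2 - trFh2) :
    -- the difference of the Aeppli representatives for the two references
    -- vanishes identically:
    -- `-R₂[g,ĝ₁] + R₂[g,ĝ₂] + R₂[h,ĥ₁] - R₂[h,ĥ₂] - β̂₁ + β̂₂ = 0`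
    -(-Complex.I • S.dbarDagDdag γg1) + (-Complex.I • S.dbarDagDdag γg2)
      + (-Complex.I • S.dbarDagDdag γh1) - (-Complex.I • S.dbarDagDdag γh2)
      - (-Complex.I • S.dbarDagDdag γhat1) + (-Complex.I • S.dbarDagDdag γhat2)
      = 0 := by
  set δ : S.V 2 2 := -γg1 + γg2 + γh1 - γh2 - γhat1 + γhat2 with hδdef
  have hker : δ ∈ LinearMap.ker S.KSlin := by
    have : S.KSlin δ = 0 := by
      have e : S.KSlin δ = -(S.KS γg1) + S.KS γg2 + S.KS γh1 - S.KS γh2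
          - S.KS γhat1 + S.KS γhat2 := by
        simp only [hδdef, map_add, map_sub, map_neg]
        rfl
      rw [e, hEγg1, hEγg2, hEγh1, hEγh2, hEγhat1, hEγhat2]
      abel
    simpa using this
  have hperp : δ ∈ (LinearMap.ker S.KSlin)ᗮ := by
    exact Submodule.add_mem _ (Submodule.sub_mem _ (Submodule.sub_mem _
      (Submodule.add_mem _ (Submodule.add_mem _ (Submodule.neg_mem _ hγg1) hγg2) hγh1)
      hγh2) hγhat1) hγhat2
  have hδ0 : δ = 0 := by
    have := hperp δ hker
    rwa [inner_self_eq_zero] at this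
  have hmap : S.dbarDagDdag δ = 0 := by rw [hδ0]; simp [DolbeaultHodge.dbarDagDdag]
  have hmap' : -(S.dbarDagDdag γg1) + S.dbarDagDdag γg2 + S.dbarDagDdag γh1
      - S.dbarDagDdag γh2 - S.dbarDagDdag γhat1 + S.dbarDagDdag γhat2 = 0 := by
    simpa [hδdef, DolbeaultHodge.dbarDagDdag, map_add, map_sub, map_neg] using hmap
  have expand : -(-Complex.I • S.dbarDagDdag γg1) + (-Complex.I • S.dbarDagDdag γg2)
      + (-Complex.I • S.dbarDagDdag γh1) - (-Complex.I • S.dbarDagDdag γh2)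
      - (-Complex.I • S.dbarDagDdag γhat1) + (-Complex.I • S.dbarDagDdag γhat2)
      = (-Complex.I) • (-(S.dbarDagDdag γg1) + S.dbarDagDdag γg2 + S.dbarDagDdag γh1
      - S.dbarDagDdag γh2 - S.dbarDagDdag γhat1 + S.dbarDagDdag γhat2) := by
    simp only [smul_add, smul_sub, smul_neg]
  rw [expand, hmap', smul_zero]
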